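/- Let (Ω, Σ, μ) be a finite measure space, X a Banach space, and let f : Ω → X be Bochner-integrable. Then f is RL-integrable and its RL integral equals its Bochner integral. -/

import Mathlib

open MeasureTheory Set Pointwise

/-- A countable partition of `A` into pairwise disjoint measurable pieces
(possibly empty, so that finite partitions are included). -/
def IsRLPartition {Ω : Type*} [MeasurableSpace Ω] (A : Set Ω) (P : ℕ → Set Ω) : Prop :=
  (∀ i, MeasurableSet (P i)) ∧ Pairwise (Function.onFun Disjoint P) ∧ (⋃ i, P i) = A

/-- `Γ` is finer than (inscribed into) `P`: every piece of `Γ` is contained in a piece of `P`. -/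
def IsFinerPartition {Ω : Type*} (Γ P : ℕ → Set Ω) : Prop :=
  ∀ j, ∃ i, Γ j ⊆ P i

/-- `T` is a choice of sampling points for the partition `P`. -/
def IsSampling {Ω : Type*} (P : ℕ → Set Ω) (T : ℕ → Ω) : Prop :=
  ∀ i, (P i).Nonempty → T i ∈ P i

/-- The RL integral sum `S(f, P, T) = ∑ᵢ μ(Pᵢ) • f(Tᵢ)`. -/
noncomputable def RLSum {Ω X : Type*} [MeasurableSpace Ω] [NormedAddCommGroup X]
    [NormedSpace ℝ X] (μ : Measure Ω) (f : Ω → X) (P : ℕ → Set Ω) (T : ℕ → Ω) : X :=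
  ∑' i, (μ (P i)).toReal • f (T i)

/-- Absolute convergence of the RL integral sum. -/
def RLSumAbsConv {Ω X : Type*} [MeasurableSpace Ω] [NormedAddCommGroup X]
    (μ : Measure Ω) (f : Ω → X) (P : ℕ → Set Ω) (T : ℕ → Ω) : Prop :=
  Summable fun i => (μ (P i)).toReal * ‖f (T i)‖

/-- `f` is RL-integrable over `A` with RL integral `x`. -/
def HasRLIntegral {Ω X : Type*} [MeasurableSpace Ω] [NormedAddCommGroup X] [NormedSpace ℝ X]
    (μ : Measure Ω) (f : Ω → X) (A : Set Ω) (x : X) : Prop :=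
  ∀ ε > 0, ∃ P : ℕ → Set Ω, IsRLPartition A P ∧
    ∀ Γ : ℕ → Set Ω, IsRLPartition A Γ → IsFinerPartition Γ P →
      ∀ T : ℕ → Ω, IsSampling Γ T →
        RLSumAbsConv μ f Γ T ∧ ‖RLSum μ f Γ T - x‖ < ε

/-- `f` has a Lebesgue-integrable majorant, i.e. `f ∈ L̄₁(Ω, Σ, μ, X)`. -/
def HasIntegrableMajorant {Ω X : Type*} [MeasurableSpace Ω] [NormedAddCommGroup X]
    (μ : Measure Ω) (f : Ω → X) : Prop :=
  ∃ g : Ω → ℝ, Integrable g μ ∧ ∀ t, ‖f t‖ ≤ g t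

/-- The limit set `I(f)`: all limit points of the net of absolute RL integral sums. -/
def RLLimitSet {Ω X : Type*} [MeasurableSpace Ω] [NormedAddCommGroup X] [NormedSpace ℝ X]
    (μ : Measure Ω) (f : Ω → X) : Set X :=
  {x | ∀ ε > 0, ∀ P : ℕ → Set Ω, IsRLPartition Set.univ P →
    ∃ Γ : ℕ → Set Ω, IsRLPartition Set.univ Γ ∧ IsFinerPartition Γ P ∧
      ∃ T : ℕ → Ω, IsSampling Γ T ∧ RLSumAbsConv μ f Γ T ∧ ‖RLSum μ f Γ T - x‖ < ε}

/-- `g` is a Bochner-integrable equivalent of `f`: `g` is Bochner integrable and the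
RL integral of `f` over every measurable set equals the Bochner integral of `g` over it. -/
def BochnerEquivalent {Ω X : Type*} [MeasurableSpace Ω] [NormedAddCommGroup X] [NormedSpace ℝ X]
    (μ : Measure Ω) (f g : Ω → X) : Prop :=
  Integrable g μ ∧ ∀ A : Set Ω, MeasurableSet A → HasRLIntegral μ f A (∫ ω in A, g ω ∂μ)

/-- `f : [0,1] → X` is Riemann integrable with Riemann integral `x`. -/
def HasRiemannIntegral {X : Type*} [NormedAddCommGroup X] [NormedSpace ℝ X]
    (f : ℝ → X) (x : X) : Prop :=
  ∀ ε > 0, ∃ δ > 0, ∀ (n : ℕ) (a : ℕ → ℝ) (t : ℕ → ℝ),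
    a 0 = 0 → a n = 1 → (∀ i < n, a i ≤ a (i + 1)) →
    (∀ i < n, a (i + 1) - a i < δ) →
    (∀ i < n, t i ∈ Set.Icc (a i) (a (i + 1))) →
    ‖(∑ i ∈ Finset.range n, (a (i + 1) - a i) • f (t i)) - x‖ < ε

/-- A Bochner-integrable function `f : Ω → X` is RL-integrable and its RL
integral equals its Bochner integral. -/
theorem hasRLIntegral_of_bochner
    {Ω X : Type*} [MeasurableSpace Ω] [NormedAddCommGroup X] [NormedSpace ℝ X] [CompleteSpace X]
    (μ : Measure Ω) [IsFiniteMeasure μ] (f : Ω → X) (hf : Integrable f μ) :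
    HasRLIntegral μ f Set.univ (∫ ω, f ω ∂μ) := by
  borelize X
  intro ε hε
  set g := hf.1.mk f with hgdef
  have hgm : StronglyMeasurable g := hf.1.stronglyMeasurable_mk
  have hfg : f =ᵐ[μ] g := hf.1.ae_eq_mk
  have hgint : Integrable g μ := hf.congr hfg
  set N := toMeasurable μ {ω | f ω ≠ g ω} with hNdef
  have hNm : MeasurableSet N := measurableSet_toMeasurable _ _
  have hN0 : μ N = 0 := by
    rw [hNdef, measure_toMeasurable]
    exact ae_iff.mp hfg
  have hNc : ∀ ω ∉ N, f ω = g ω := by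
    intro ω hω
    by_contra h
    exact hω (subset_toMeasurable _ _ h)
  obtain ⟨D, hDc, hDsub⟩ := hgm.isSeparable_range
  obtain ⟨d, hd⟩ := (hDc.insert (0 : X)).exists_eq_range (Set.insert_nonempty _ _)
  set m := (μ Set.univ).toReal with hmdef
  have hm : 0 ≤ m := ENNReal.toReal_nonneg
  set δ := ε / (2 * (m + 1)) with hδdef
  have hδ : 0 < δ := div_pos hε (by linarith)
  have hcover : ∀ ω, ∃ k, dist (g ω) (d k) < δ := by
    intro ω
    have h1 : g ω ∈ closure (insert (0 : X) D) :=
      closure_mono (Set.subset_insert _ _) (hDsub (Set.mem_range_self ω))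
    rw [hd] at h1
    rcases Metric.mem_closure_iff.mp h1 δ hδ with ⟨y, ⟨k, rfl⟩, hdy⟩
    exact ⟨k, hdy⟩
  set F : ℕ → Set Ω := fun k => g ⁻¹' Metric.ball (d k) δ ∩ Nᶜ with hFdef
  set Q : ℕ → Set Ω := disjointed F with hQdef
  have hQm : ∀ k, MeasurableSet (Q k) :=
    MeasurableSet.disjointed fun k =>
      (hgm.measurable measurableSet_ball).inter hNm.compl
  have hQd : Pairwise (Function.onFun Disjoint Q) := disjoint_disjointed F
  have hQsub : ∀ k, Q k ⊆ F k := fun k => disjointed_subset F k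
  have hQU : (⋃ k, Q k) = Nᶜ := by
    rw [hQdef, iUnion_disjointed]
    apply Set.Subset.antisymm
    · exact Set.iUnion_subset fun k => Set.inter_subset_right
    · intro ω hω
      obtain ⟨k, hk⟩ := hcover ω
      exact Set.mem_iUnion.mpr ⟨k, ⟨Metric.mem_ball.mpr hk, hω⟩⟩
  set P : ℕ → Set Ω := fun n => Nat.casesOn n N Q with hPdef
  have hQN : ∀ k, Q k ⊆ Nᶜ := fun k => (hQsub k).trans Set.inter_subset_right
  refine ⟨P, ⟨?_, ?_, ?_⟩, ?_⟩
  · intro i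
    cases i with
    | zero => exact hNm
    | succ k => exact hQm k
  · intro i j hij
    match i, j with
    | 0, 0 => exact absurd rfl hij
    | 0, k+1 =>
      exact Set.disjoint_left.mpr fun ω hω hω' => (hQN k hω') hω
    | k+1, 0 =>
      exact Set.disjoint_left.mpr fun ω hω hω' => (hQN k hω) hω'
    | k+1, l+1 =>
      exact hQd (fun h => hij (by omega))
  · apply Set.eq_univ_of_forall
    intro ω
    by_cases hω : ω ∈ N
    · exact Set.mem_iUnion.mpr ⟨0, hω⟩
    · obtain ⟨k, hk⟩ := Set.mem_iUnion.mp (show ω ∈ ⋃ k, Q k by rw [hQU]; exact hω)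
      exact Set.mem_iUnion.mpr ⟨k + 1, hk⟩
  · intro Γ hΓ hΓP T hT
    obtain ⟨hΓm, hΓd, hΓU⟩ := hΓ
    -- basic case analysis for each piece of Γ
    have hcase : ∀ j, μ (Γ j) = 0 ∨ ∃ k, Γ j ⊆ Q k ∧ (Γ j).Nonempty := by
      intro j
      rcases Set.eq_empty_or_nonempty (Γ j) with he | hne
      · left; rw [he]; exact measure_empty
      · obtain ⟨i, hi⟩ := hΓP j
        cases i with
        | zero => exact Or.inl (measure_mono_null hi hN0)
        | succ k => exact Or.inr ⟨k, hi, hne⟩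
    -- summability of measures
    have hμsum : Summable fun j => (μ (Γ j)).toReal := by
      apply ENNReal.summable_toReal
      rw [← measure_iUnion hΓd hΓm, hΓU]
      exact measure_ne_top μ _
    have hμtsum : ∑' j, (μ (Γ j)).toReal = m := by
      rw [← ENNReal.tsum_toReal_eq fun j => measure_ne_top μ _,
        ← measure_iUnion hΓd hΓm, hΓU]
    -- sums of integrals
    have hgΓ : ∀ j, IntegrableOn g (Γ j) μ := fun j => hgint.integrableOn
    have hsum_int : HasSum (fun j => ∫ ω in Γ j, g ω ∂μ) (∫ ω, g ω ∂μ) := by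
      have h := hasSum_integral_iUnion (f := g) (μ := μ) hΓm hΓd
        (by rw [hΓU]; exact hgint.integrableOn)
      rwa [hΓU, setIntegral_univ] at h
    have hsum_normg : HasSum (fun j => ∫ ω in Γ j, ‖g ω‖ ∂μ) (∫ ω, ‖g ω‖ ∂μ) := by
      have h := hasSum_integral_iUnion (f := fun ω => ‖g ω‖) (μ := μ) hΓm hΓd
        (by rw [hΓU]; exact hgint.norm.integrableOn)
      rwa [hΓU, setIntegral_univ] at h
    -- key facts on nondegenerate pieces
    have hkey : ∀ j k, Γ j ⊆ Q k → (Γ j).Nonempty →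
        f (T j) = g (T j) ∧ ∀ s ∈ Γ j, ‖g (T j) - g s‖ ≤ 2 * δ := by
      intro j k hsub hne
      have hTj : T j ∈ Γ j := hT j hne
      have hTQ : T j ∈ Q k := hsub hTj
      have hTF : T j ∈ F k := hQsub k hTQ
      refine ⟨hNc _ (hTF.2), fun s hs => ?_⟩
      have hsF : s ∈ F k := hQsub k (hsub hs)
      have h1 : dist (g (T j)) (d k) < δ := Metric.mem_ball.mp hTF.1
      have h2 : dist (g s) (d k) < δ := Metric.mem_ball.mp hsF.1
      calc ‖g (T j) - g s‖ = dist (g (T j)) (g s) := (dist_eq_norm _ _).symm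
        _ ≤ dist (g (T j)) (d k) + dist (g s) (d k) := dist_triangle_right _ _ _
        _ ≤ 2 * δ := by linarith
    -- absolute convergence
    have habs : RLSumAbsConv μ f Γ T := by
      have hB : Summable fun j =>
          (∫ ω in Γ j, ‖g ω‖ ∂μ) + 2 * δ * (μ (Γ j)).toReal :=
        hsum_normg.summable.add (hμsum.mul_left (2 * δ))
      refine Summable.of_nonneg_of_le (fun j => mul_nonneg ENNReal.toReal_nonneg (norm_nonneg _))
        (fun j => ?_) hB
      rcases hcase j with h0 | ⟨k, hsub, hne⟩
      · rw [h0]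
        simp only [ENNReal.toReal_zero, zero_mul]
        positivity
      · obtain ⟨hfT, hosc⟩ := hkey j k hsub hne
        rw [hfT]
        have hle : ∀ s ∈ Γ j, ‖g (T j)‖ ≤ ‖g s‖ + 2 * δ := by
          intro s hs
          have := hosc s hs
          have h3 : ‖g (T j)‖ - ‖g s‖ ≤ ‖g (T j) - g s‖ := norm_sub_norm_le _ _
          linarith
        have h4 : ‖g (T j)‖ * (μ (Γ j)).toReal ≤ ∫ s in Γ j, (‖g s‖ + 2 * δ) ∂μ :=
          by
            have h := setIntegral_ge_of_const_le (hΓm j) (measure_ne_top μ _) hle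
              ((hgΓ j).norm.add (integrableOn_const (measure_ne_top μ _)))
            rw [measureReal_def, smul_eq_mul, mul_comm] at h
            exact h
        rw [integral_add (hgΓ j).norm (integrableOn_const (measure_ne_top μ _)),
          setIntegral_const, smul_eq_mul] at h4
        calc (μ (Γ j)).toReal * ‖g (T j)‖ = ‖g (T j)‖ * (μ (Γ j)).toReal := mul_comm _ _
          _ ≤ (∫ s in Γ j, ‖g s‖ ∂μ) + (μ (Γ j)).toReal * (2 * δ) := h4
          _ = (∫ ω in Γ j, ‖g ω‖ ∂μ) + 2 * δ * (μ (Γ j)).toReal := by ring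
    refine ⟨habs, ?_⟩
    -- summability of the RL sum terms
    have hsS : Summable fun j => (μ (Γ j)).toReal • f (T j) := by
      apply Summable.of_norm
      have : (fun j => ‖(μ (Γ j)).toReal • f (T j)‖)
          = fun j => (μ (Γ j)).toReal * ‖f (T j)‖ := by
        funext j
        rw [norm_smul, Real.norm_eq_abs, abs_of_nonneg ENNReal.toReal_nonneg]
      rw [this]
      exact habs
    -- termwise estimate
    have hkey2 : ∀ j, ‖(μ (Γ j)).toReal • f (T j) - ∫ ω in Γ j, g ω ∂μ‖
        ≤ 2 * δ * (μ (Γ j)).toReal := by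
      intro j
      rcases hcase j with h0 | ⟨k, hsub, hne⟩
      · rw [h0, setIntegral_measure_zero _ h0]
        simp
      · obtain ⟨hfT, hosc⟩ := hkey j k hsub hne
        rw [hfT]
        have hconst : (μ (Γ j)).toReal • g (T j) = ∫ _ in Γ j, g (T j) ∂μ :=
          (setIntegral_const _).symm
        rw [hconst, ← integral_sub (integrableOn_const (C := g (T j)) (measure_ne_top μ _)) (hgΓ j)]
        exact norm_setIntegral_le_of_norm_le_const (measure_lt_top μ _) hosc
    have hsum_diff : Summable fun j =>
        (μ (Γ j)).toReal • f (T j) - ∫ ω in Γ j, g ω ∂μ := hsS.sub hsum_int.summable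
    have hnorm_sum : Summable fun j =>
        ‖(μ (Γ j)).toReal • f (T j) - ∫ ω in Γ j, g ω ∂μ‖ :=
      Summable.of_nonneg_of_le (fun j => norm_nonneg _) hkey2 (hμsum.mul_left (2 * δ))
    have hfgint : ∫ ω, f ω ∂μ = ∫ ω, g ω ∂μ := integral_congr_ae hfg
    have hmain : ‖RLSum μ f Γ T - ∫ ω, f ω ∂μ‖ ≤ 2 * δ * m := by
      rw [hfgint, RLSum, ← hsum_int.tsum_eq, ← Summable.tsum_sub hsS hsum_int.summable]
      calc ‖∑' j, ((μ (Γ j)).toReal • f (T j) - ∫ ω in Γ j, g ω ∂μ)‖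
          ≤ ∑' j, ‖(μ (Γ j)).toReal • f (T j) - ∫ ω in Γ j, g ω ∂μ‖ :=
            norm_tsum_le_tsum_norm hnorm_sum
        _ ≤ ∑' j, 2 * δ * (μ (Γ j)).toReal :=
            Summable.tsum_le_tsum hkey2 hnorm_sum (hμsum.mul_left (2 * δ))
        _ = 2 * δ * m := by rw [tsum_mul_left, hμtsum]
    have hlt : 2 * δ * m < ε := by
      have h1 : (0:ℝ) < m + 1 := by linarith
      have h2 : 2 * δ * m = ε * (m / (m + 1)) := by
        rw [hδdef]; field_simp
      rw [h2]
      calc ε * (m / (m + 1)) < ε * 1 := by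
            apply mul_lt_mul_of_pos_left _ hε
            rw [div_lt_one h1]; linarith
        _ = ε := mul_one ε
    exact lt_of_le_of_lt hmain hlt
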